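/- arXiv:2511.07136 — 3 statements merged into one kernel-verified Lean document; each statement's English description precedes it below -/
import Mathlib

section
/- In 𝒰, if there exist i, j ∈ I with c_{ij} = c_{ji} = −1, then [h_{i,1}, h_{i,3}] = 0, h_{i,4} = [b_{i,0}, b_{i,4}] = 0, and [b_{i,1}, b_{i,3}] = 0. -/
noncomputable section

/-- Data of a symmetrizable generalized Cartan matrix `(c_{ij})` (of finite type size bounds)
together with a positive symmetrizer `(d_i)`. -/
structure CartanData (I : Type) [Fintype I] : Type where
  c : I → I → ℤ
  d : I → ℝ
  c_diag : ∀ i, c i i = 2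
  c_nonpos : ∀ i j, i ≠ j → c i j ≤ 0
  c_zero_iff : ∀ i j, c i j = 0 ↔ c j i = 0
  c_bound : ∀ i j, i ≠ j → c i j * c j i ≤ 3
  d_pos : ∀ i, 0 < d i
  d_symm : ∀ i j, d i * (c i j : ℝ) = d j * (c j i : ℝ)

/-- The pairing `(α_i, α_j) = d_i · c_{ij}`. -/
def CartanData.al {I : Type} [Fintype I] (A : CartanData I) (i j : I) : ℝ :=
  A.d i * (A.c i j : ℝ)

/-- Generators for Drinfeld-type presentations: `h i r` stands for `h_{i,2r+1}` and
`b i r` stands for `b_{i,r}`. -/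
inductive TYGen (I : Type) : Type
  | h : I → ℕ → TYGen I
  | b : I → ℕ → TYGen I

section Algebras

variable {I : Type} [Fintype I] [DecidableEq I]

/-- The element `h_{i,r}` of the free algebra, for `r : ℤ`, with the conventions
`h_{i,-1} = 1` and `h_{i,r} = 0` for `r` even or `r < -1`. -/
def TYh (i : I) (r : ℤ) : FreeAlgebra ℂ (TYGen I) :=
  if r = -1 then 1
  else if 0 ≤ r ∧ r % 2 = 1 then FreeAlgebra.ι ℂ (TYGen.h i ((r - 1) / 2).toNat)
  else 0

/-- The generator `b_{i,r}` of the free algebra. -/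
def TYb (i : I) (r : ℕ) : FreeAlgebra ℂ (TYGen I) := FreeAlgebra.ι ℂ (TYGen.b i r)

/-- The generator `h_{i,2r+1}` of the free algebra. -/
def TYhodd (i : I) (r : ℕ) : FreeAlgebra ℂ (TYGen I) := FreeAlgebra.ι ℂ (TYGen.h i r)

/-- The element `h_{i,n}` of the free algebra, `n : ℕ`, with the convention `h_{i,2r} = 0`. -/
def TYhnat (i : I) (n : ℕ) : FreeAlgebra ℂ (TYGen I) :=
  if n % 2 = 1 then FreeAlgebra.ι ℂ (TYGen.h i ((n - 1) / 2)) else 0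

/-- Defining relations of the twisted Yangian `ᵢY` in Drinfeld presentation. -/
inductive TYRel (A : CartanData I) : FreeAlgebra ℂ (TYGen I) → FreeAlgebra ℂ (TYGen I) → Prop
  | ty0 (i j : I) (r s : ℤ) : TYRel A ⁅TYh i r, TYh j s⁆ 0
  | ty1 (i j : I) (r s : ℕ) :
      TYRel A (⁅TYh i ((r : ℤ) + 1), TYb j s⁆ - ⁅TYh i ((r : ℤ) - 1), TYb j (s + 2)⁆)
        ((A.al i j : ℂ) •
            (TYh i ((r : ℤ) - 1) * TYb j (s + 1) + TYb j (s + 1) * TYh i ((r : ℤ) - 1))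
          + (((A.al i j : ℂ) ^ 2 / 4) • ⁅TYh i ((r : ℤ) - 1), TYb j s⁆))
  | ty2 (i j : I) (r s : ℕ) :
      TYRel A (⁅TYb i (r + 1), TYb j s⁆ - ⁅TYb i r, TYb j (s + 1)⁆)
        (((A.al i j : ℂ) / 2) • (TYb i r * TYb j s + TYb j s * TYb i r)
          - (if i = j then (2 : ℂ) * (-1 : ℂ) ^ s else 0) • TYh i ((r : ℤ) + (s : ℤ) + 1))
  | serre0 (i j : I) (hc : A.c i j = 0) : TYRel A ⁅TYb i 0, TYb j 0⁆ 0
  | serre1 (i j : I) (hc : A.c i j = -1) :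
      TYRel A ⁅TYb i 0, ⁅TYb i 0, TYb j 0⁆⁆ ((-(A.d i : ℂ)) • TYb j 0)
  | serre2 (i j : I) (hc : A.c i j = -2) :
      TYRel A ⁅TYb i 0, ⁅TYb i 0, ⁅TYb i 0, TYb j 0⁆⁆⁆
        (((-4 : ℂ) * (A.d i : ℂ)) • ⁅TYb i 0, TYb j 0⁆)
  | serre3 (i j : I) (hc : A.c i j = -3) :
      TYRel A ⁅TYb i 0, ⁅TYb i 0, ⁅TYb i 0, ⁅TYb i 0, TYb j 0⁆⁆⁆⁆
        (((-10 : ℂ) * (A.d i : ℂ)) • ⁅TYb i 0, ⁅TYb i 0, TYb j 0⁆⁆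
          + ((-9 : ℂ) * (A.d i : ℂ) ^ 2) • TYb j 0)

/-- The twisted Yangian `ᵢY` in Drinfeld presentation. -/
abbrev TY (A : CartanData I) : Type := RingQuot (TYRel A)

/-- The generator `h_{i,2r+1}` of the twisted Yangian `ᵢY`. -/
def tyH (A : CartanData I) (i : I) (r : ℕ) : TY A :=
  RingQuot.mkAlgHom ℂ (TYRel A) (TYhodd i r)

/-- The generator `b_{i,r}` of the twisted Yangian `ᵢY`. -/
def tyB (A : CartanData I) (i : I) (r : ℕ) : TY A :=
  RingQuot.mkAlgHom ℂ (TYRel A) (TYb i r)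

/-- Defining relations of the algebra `𝔅` (the presentation of `U(g[z]^ω̌)`). -/
inductive BRel (A : CartanData I) : FreeAlgebra ℂ (TYGen I) → FreeAlgebra ℂ (TYGen I) → Prop
  | hh (i j : I) (r s : ℕ) : BRel A ⁅TYhodd i r, TYhodd j s⁆ 0
  | hb (i j : I) (r s : ℕ) :
      BRel A ⁅TYhodd i r, TYb j s⁆ ((2 * (A.al i j : ℂ)) • TYb j (2 * r + s + 1))
  | bb (i j : I) (r s : ℕ) :
      BRel A (⁅TYb i (r + 1), TYb j s⁆ - ⁅TYb i r, TYb j (s + 1)⁆)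
        ((-(if i = j then (-1 : ℂ) ^ r + (-1 : ℂ) ^ s else 0)) • TYhnat i (r + s + 1))
  | serre0 (i j : I) (hc : A.c i j = 0) : BRel A ⁅TYb i 0, TYb j 0⁆ 0
  | serre1 (i j : I) (hc : A.c i j = -1) :
      BRel A ⁅TYb i 0, ⁅TYb i 0, TYb j 0⁆⁆ ((-(A.d i : ℂ)) • TYb j 0)
  | serre2 (i j : I) (hc : A.c i j = -2) :
      BRel A ⁅TYb i 0, ⁅TYb i 0, ⁅TYb i 0, TYb j 0⁆⁆⁆
        (((-4 : ℂ) * (A.d i : ℂ)) • ⁅TYb i 0, TYb j 0⁆)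
  | serre3 (i j : I) (hc : A.c i j = -3) :
      BRel A ⁅TYb i 0, ⁅TYb i 0, ⁅TYb i 0, ⁅TYb i 0, TYb j 0⁆⁆⁆⁆
        (((-10 : ℂ) * (A.d i : ℂ)) • ⁅TYb i 0, ⁅TYb i 0, TYb j 0⁆⁆
          + ((-9 : ℂ) * (A.d i : ℂ) ^ 2) • TYb j 0)

/-- The algebra `𝔅`. -/
abbrev BAlg (A : CartanData I) : Type := RingQuot (BRel A)

/-- The generator `h_{i,2r+1}` of `𝔅`. -/
def hB (A : CartanData I) (i : I) (r : ℕ) : BAlg A :=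
  RingQuot.mkAlgHom ℂ (BRel A) (TYhodd i r)

/-- The generator `b_{i,r}` of `𝔅`. -/
def bB (A : CartanData I) (i : I) (r : ℕ) : BAlg A :=
  RingQuot.mkAlgHom ℂ (BRel A) (TYb i r)

end Algebras

/-- Generators `h_{i,1}`, `b_{i,0}`, `b_{i,1}` for the minimalistic presentations. -/
inductive MinGen (I : Type) : Type
  | h1 : I → MinGen I
  | b0 : I → MinGen I
  | b1 : I → MinGen I

section MinAlgebras

variable {I : Type} [Fintype I] [DecidableEq I]

/-- The generator `h_{i,1}` of the free algebra. -/
def mh (i : I) : FreeAlgebra ℂ (MinGen I) := FreeAlgebra.ι ℂ (MinGen.h1 i)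

/-- The generator `b_{i,0}` of the free algebra. -/
def mb0 (i : I) : FreeAlgebra ℂ (MinGen I) := FreeAlgebra.ι ℂ (MinGen.b0 i)

/-- The generator `b_{i,1}` of the free algebra. -/
def mb1 (i : I) : FreeAlgebra ℂ (MinGen I) := FreeAlgebra.ι ℂ (MinGen.b1 i)

/-- Defining relations of the minimalistic presentation `ᵢY^min`. -/
inductive MinRel (A : CartanData I) : FreeAlgebra ℂ (MinGen I) → FreeAlgebra ℂ (MinGen I) → Prop
  | hh (i j : I) : MinRel A ⁅mh i, mh j⁆ 0
  | hb (i j : I) : MinRel A ⁅mh i, mb0 j⁆ ((2 * (A.al i j : ℂ)) • mb1 j)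
  | bb (i j : I) :
      MinRel A (⁅mb1 i, mb0 j⁆ - ⁅mb0 i, mb1 j⁆)
        (((A.al i j : ℂ) / 2) • (mb0 i * mb0 j + mb0 j * mb0 i)
          - (if i = j then (2 : ℂ) else 0) • mh i)
  | serre0 (i j : I) (hc : A.c i j = 0) : MinRel A ⁅mb0 i, mb0 j⁆ 0
  | serre1 (i j : I) (hc : A.c i j = -1) :
      MinRel A ⁅mb0 i, ⁅mb0 i, mb0 j⁆⁆ ((-(A.d i : ℂ)) • mb0 j)
  | serre2 (i j : I) (hc : A.c i j = -2) :
      MinRel A ⁅mb0 i, ⁅mb0 i, ⁅mb0 i, mb0 j⁆⁆⁆ (((-4 : ℂ) * (A.d i : ℂ)) • ⁅mb0 i, mb0 j⁆)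
  | serre3 (i j : I) (hc : A.c i j = -3) :
      MinRel A ⁅mb0 i, ⁅mb0 i, ⁅mb0 i, ⁅mb0 i, mb0 j⁆⁆⁆⁆
        (((-10 : ℂ) * (A.d i : ℂ)) • ⁅mb0 i, ⁅mb0 i, mb0 j⁆⁆
          + ((-9 : ℂ) * (A.d i : ℂ) ^ 2) • mb0 j)

/-- The relations of `ᵢY^min` together with the additional relation
`[h_{i₀,1},[b_{i₀,1},[h_{i₀,1},b_{i₀,1}]]] = (α_{i₀},α_{i₀})² [b_{i₀,1}², h_{i₀,1}]`. -/
inductive MinRelP (A : CartanData I) (i₀ : I) :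
    FreeAlgebra ℂ (MinGen I) → FreeAlgebra ℂ (MinGen I) → Prop
  | base {x y : FreeAlgebra ℂ (MinGen I)} : MinRel A x y → MinRelP A i₀ x y
  | extra : MinRelP A i₀ ⁅mh i₀, ⁅mb1 i₀, ⁅mh i₀, mb1 i₀⁆⁆⁆
      (((A.al i₀ i₀ : ℂ) ^ 2) • ⁅mb1 i₀ * mb1 i₀, mh i₀⁆)

/-- Defining relations of the algebra `𝒰`. -/
inductive URel (A : CartanData I) : FreeAlgebra ℂ (MinGen I) → FreeAlgebra ℂ (MinGen I) → Prop
  | hh (i j : I) : URel A ⁅mh i, mh j⁆ 0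
  | hb (i j : I) : URel A ⁅mh i, mb0 j⁆ ((2 * (A.al i j : ℂ)) • mb1 j)
  | bb (i j : I) :
      URel A ⁅mb1 i, mb0 j⁆ (⁅mb0 i, mb1 j⁆ - (if i = j then (2 : ℂ) else 0) • mh i)
  | serre0 (i j : I) (hc : A.c i j = 0) : URel A ⁅mb0 i, mb0 j⁆ 0
  | serre1 (i j : I) (hc : A.c i j = -1) :
      URel A ⁅mb0 i, ⁅mb0 i, mb0 j⁆⁆ ((-(A.d i : ℂ)) • mb0 j)
  | serre2 (i j : I) (hc : A.c i j = -2) :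
      URel A ⁅mb0 i, ⁅mb0 i, ⁅mb0 i, mb0 j⁆⁆⁆ (((-4 : ℂ) * (A.d i : ℂ)) • ⁅mb0 i, mb0 j⁆)
  | serre3 (i j : I) (hc : A.c i j = -3) :
      URel A ⁅mb0 i, ⁅mb0 i, ⁅mb0 i, ⁅mb0 i, mb0 j⁆⁆⁆⁆
        (((-10 : ℂ) * (A.d i : ℂ)) • ⁅mb0 i, ⁅mb0 i, mb0 j⁆⁆
          + ((-9 : ℂ) * (A.d i : ℂ) ^ 2) • mb0 j)

/-- The relations of `𝒰` together with the additional relation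
`[h_{i₀,1},[b_{i₀,1},[h_{i₀,1},b_{i₀,1}]]] = 0`. -/
inductive URelP (A : CartanData I) (i₀ : I) :
    FreeAlgebra ℂ (MinGen I) → FreeAlgebra ℂ (MinGen I) → Prop
  | base {x y : FreeAlgebra ℂ (MinGen I)} : URel A x y → URelP A i₀ x y
  | extra : URelP A i₀ ⁅mh i₀, ⁅mb1 i₀, ⁅mh i₀, mb1 i₀⁆⁆⁆ 0

/-- The algebra `𝒰`. -/
abbrev UAlg (A : CartanData I) : Type := RingQuot (URel A)

/-- The generator `h_{i,1}` of `𝒰`. -/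
def uH1 (A : CartanData I) (i : I) : UAlg A := RingQuot.mkAlgHom ℂ (URel A) (mh i)

/-- The generator `b_{i,0}` of `𝒰`. -/
def uB0 (A : CartanData I) (i : I) : UAlg A := RingQuot.mkAlgHom ℂ (URel A) (mb0 i)

/-- The generator `b_{i,1}` of `𝒰`. -/
def uB1 (A : CartanData I) (i : I) : UAlg A := RingQuot.mkAlgHom ℂ (URel A) (mb1 i)

/-- The elements `b_{i,r}` of `𝒰`, defined recursively by
`b_{i,r+1} := (2(α_i,α_i))⁻¹ [h_{i,1}, b_{i,r}]` for `r ≥ 1`. -/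
def uB (A : CartanData I) (i : I) : ℕ → UAlg A
  | 0 => uB0 A i
  | 1 => uB1 A i
  | r + 2 => (2 * (A.al i i : ℂ))⁻¹ • ⁅uH1 A i, uB A i (r + 1)⁆

/-- The elements `h_{i,r}` of `𝒰`: `h_{i,0} := 0`, `h_{i,1}` is the generator, and
`h_{i,r+1} := [b_{i,0}, b_{i,r+1}]` for `r ≥ 1`. -/
def uH (A : CartanData I) (i : I) : ℕ → UAlg A
  | 0 => 0
  | 1 => uH1 A i
  | r + 2 => ⁅uB0 A i, uB A i (r + 2)⁆

end MinAlgebras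


section Aux16

variable {I : Type} [Fintype I] [DecidableEq I]

private lemma smulCancel16 {R : Type*} [AddCommGroup R] [Module ℂ R] (c : ℂ) (hc : c ≠ 0)
    {x y : R} (h : c • x = c • y) : x = y := by
  have := congrArg (fun z => c⁻¹ • z) h
  simpa [smul_smul, inv_mul_cancel₀ hc] using this

private lemma philie16 (A : CartanData I) (x y : FreeAlgebra ℂ (MinGen I)) :
    RingQuot.mkAlgHom ℂ (URel A) ⁅x, y⁆
      = ⁅RingQuot.mkAlgHom ℂ (URel A) x, RingQuot.mkAlgHom ℂ (URel A) y⁆ := by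
  simp only [Ring.lie_def, map_sub, map_mul]

private lemma phismul16 (A : CartanData I) (c : ℂ) (x : FreeAlgebra ℂ (MinGen I)) :
    RingQuot.mkAlgHom ℂ (URel A) (c • x) = c • RingQuot.mkAlgHom ℂ (URel A) x :=
  map_smul _ c x

private lemma relhh16 (A : CartanData I) (i j : I) : ⁅uH1 A i, uH1 A j⁆ = 0 := by
  have t := RingQuot.mkAlgHom_rel ℂ (URel.hh (A := A) i j)
  rw [philie16, map_zero] at t
  exact t

private lemma relhb16 (A : CartanData I) (i j : I) :
    ⁅uH1 A i, uB0 A j⁆ = (2 * (A.al i j : ℂ)) • uB1 A j := by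
  have t := RingQuot.mkAlgHom_rel ℂ (URel.hb (A := A) i j)
  rw [philie16, phismul16] at t
  exact t

private lemma relbbii16 (A : CartanData I) (i : I) :
    ⁅uB1 A i, uB0 A i⁆ = ⁅uB0 A i, uB1 A i⁆ - (2 : ℂ) • uH1 A i := by
  have t := RingQuot.mkAlgHom_rel ℂ (URel.bb (A := A) i i)
  rw [if_pos rfl, map_sub, philie16, philie16, phismul16] at t
  exact t

private lemma relbbij16 (A : CartanData I) (i j : I) (hne : i ≠ j) :
    ⁅uB1 A i, uB0 A j⁆ = ⁅uB0 A i, uB1 A j⁆ := by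
  have t := RingQuot.mkAlgHom_rel ℂ (URel.bb (A := A) i j)
  rw [if_neg hne, zero_smul, sub_zero, philie16, philie16] at t
  exact t

private lemma rels116 (A : CartanData I) (i j : I) (hc : A.c i j = -1) :
    ⁅uB0 A i, ⁅uB0 A i, uB0 A j⁆⁆ = (-(A.d i : ℂ)) • uB0 A j := by
  have t := RingQuot.mkAlgHom_rel ℂ (URel.serre1 (A := A) i j hc)
  rw [philie16, philie16, phismul16] at t
  exact t

end Aux16

/-- in `𝒰`, if `c_{ij} = c_{ji} = -1` then `[h_{i,1}, h_{i,3}] = 0`,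
`h_{i,4} = [b_{i,0}, b_{i,4}] = 0` and `[b_{i,1}, b_{i,3}] = 0`. -/
theorem U_hi4_vanishing
    {I : Type} [Fintype I] [DecidableEq I] [Nonempty I] (A : CartanData I)
    (i j : I) (hij : A.c i j = -1) (hji : A.c j i = -1) :
    ⁅uH A i 1, uH A i 3⁆ = 0 ∧ uH A i 4 = 0 ∧ ⁅uB A i 0, uB A i 4⁆ = 0 ∧
      ⁅uB A i 1, uB A i 3⁆ = 0 := by
  classical
  letI : LieRing (UAlg A) := LieRing.ofAssociativeRing
  have hne : i ≠ j := by
    rintro rfl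
    rw [A.c_diag i] at hij
    exact absurd hij (by norm_num)
  set δ : ℂ := ((A.d i : ℝ) : ℂ) with hδdef
  have hδ : δ ≠ 0 := by
    rw [hδdef]
    exact_mod_cast Complex.ofReal_ne_zero.mpr (A.d_pos i).ne'
  have h4δ : (4 : ℂ) * δ ≠ 0 := mul_ne_zero (by norm_num) hδ
  have h6δ : (6 : ℂ) * δ ≠ 0 := mul_ne_zero (by norm_num) hδ
  have hdji : ((A.d j : ℝ) : ℂ) = δ := by
    have h := A.d_symm i j
    rw [hij, hji] at h
    push_cast at h
    have h2 : A.d j = A.d i := by linarith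
    rw [hδdef, h2]
  have a_ii : (2 * ((A.al i i : ℝ) : ℂ)) = 4 * δ := by
    simp only [CartanData.al, A.c_diag i, hδdef]
    push_cast
    ring
  have a_jj : (2 * ((A.al j j : ℝ) : ℂ)) = 4 * δ := by
    simp only [CartanData.al, A.c_diag j]
    push_cast
    rw [hdji]
    ring
  have a_ij : (2 * ((A.al i j : ℝ) : ℂ)) = -(2 * δ) := by
    simp only [CartanData.al, hij, hδdef]
    push_cast
    ring
  have a_ji : (2 * ((A.al j i : ℝ) : ℂ)) = -(2 * δ) := by
    simp only [CartanData.al, hji]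
    push_cast
    rw [hdji]
    ring
  -- instance-pinned helper identities
  have lsm : ∀ (c : ℂ) (x y : UAlg A), ⁅x, c • y⁆ = c • ⁅x, y⁆ := fun c x y => lie_smul c x y
  have smsm : ∀ (c e : ℂ) (x : UAlg A), c • e • x = (c * e) • x := fun c e x => smul_smul c e x
  have lskew : ∀ x y : UAlg A, ⁅x, y⁆ = -⁅y, x⁆ := fun x y => neg_eq_iff_eq_neg.mp (lie_skew y x)
  have lnegl : ∀ x y : UAlg A, ⁅-x, y⁆ = -⁅x, y⁆ := fun x y => neg_lie x y
  have lieExp : ∀ {h a b a' b' : UAlg A} {ca cb : ℂ}, ⁅h, a⁆ = ca • a' → ⁅h, b⁆ = cb • b' →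
      ⁅h, ⁅a, b⁆⁆ = ca • ⁅a', b⁆ + cb • ⁅a, b'⁆ := by
    intro h a b a' b' ca cb ha hb
    rw [leibniz_lie, ha, hb]
    exact congrArg₂ (· + ·) (smul_lie ca a' b) (lie_smul cb a b')
  -- ladders
  have LB : ∀ r, ⁅uH1 A i, uB A i r⁆ = (4 * δ) • uB A i (r + 1) := by
    intro r
    match r with
    | 0 =>
      have t := relhb16 A i i
      rw [a_ii] at t
      exact t
    | (r + 1) =>
      rw [show uB A i (r + 2) = (2 * ((A.al i i : ℝ) : ℂ))⁻¹ • ⁅uH1 A i, uB A i (r + 1)⁆ from rfl,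
        a_ii, smul_inv_smul₀ h4δ]
  have LC : ∀ r, ⁅uH1 A j, uB A j r⁆ = (4 * δ) • uB A j (r + 1) := by
    intro r
    match r with
    | 0 =>
      have t := relhb16 A j j
      rw [a_jj] at t
      exact t
    | (r + 1) =>
      rw [show uB A j (r + 2) = (2 * ((A.al j j : ℝ) : ℂ))⁻¹ • ⁅uH1 A j, uB A j (r + 1)⁆ from rfl,
        a_jj, smul_inv_smul₀ h4δ]
  have hBs : ∀ r, uB A i (r + 1) = (4 * δ)⁻¹ • ⁅uH1 A i, uB A i r⁆ := by
    intro r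
    rw [LB r, inv_smul_smul₀ h4δ]
  have hCs : ∀ r, uB A j (r + 1) = (4 * δ)⁻¹ • ⁅uH1 A j, uB A j r⁆ := by
    intro r
    rw [LC r, inv_smul_smul₀ h4δ]
  have LBC : ∀ r, ⁅uH1 A i, uB A j r⁆ = (-(2 * δ)) • uB A j (r + 1) := by
    intro r
    induction r with
    | zero =>
      have t := relhb16 A i j
      rw [a_ij] at t
      exact t
    | succ r ih =>
      have e : ⁅uH1 A i, uB A j (r + 1)⁆
          = (4 * δ)⁻¹ • (-(2 * δ)) • (4 * δ) • uB A j (r + 1 + 1) := by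
        rw [hCs r, lsm, leibniz_lie, relhh16 A i j, zero_lie, zero_add, ih, lsm, LC (r + 1)]
      rw [e, smsm, smsm, show (4 * δ)⁻¹ * (-(2 * δ)) * (4 * δ) = -(2 * δ) from by field_simp]
  have LCB : ∀ r, ⁅uH1 A j, uB A i r⁆ = (-(2 * δ)) • uB A i (r + 1) := by
    intro r
    induction r with
    | zero =>
      have t := relhb16 A j i
      rw [a_ji] at t
      exact t
    | succ r ih =>
      have e : ⁅uH1 A j, uB A i (r + 1)⁆
          = (4 * δ)⁻¹ • (-(2 * δ)) • (4 * δ) • uB A i (r + 1 + 1) := by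
        rw [hBs r, lsm, leibniz_lie, relhh16 A j i, zero_lie, zero_add, ih, lsm, LB (r + 1)]
      rw [e, smsm, smsm, show (4 * δ)⁻¹ * (-(2 * δ)) * (4 * δ) = -(2 * δ) from by field_simp]
  have hB01 : ⁅uB A i 0, uB A i 1⁆ = uH1 A i := by
    have t : ⁅uB A i 1, uB A i 0⁆ = ⁅uB A i 0, uB A i 1⁆ - (2 : ℂ) • uH1 A i := relbbii16 A i
    rw [show ⁅uB A i 1, uB A i 0⁆ = -⁅uB A i 0, uB A i 1⁆ from lskew _ _] at t
    linear_combination (norm := module) (-(1 : ℂ)/2) • t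
  have hB02 : ⁅uB A i 0, uB A i 2⁆ = 0 := by
    have e1 := lieExp (LB 0) (LB 1)
    rw [lie_self, hB01, lie_self] at e1
    apply smulCancel16 (4 * δ) h4δ
    linear_combination (norm := module) -e1
  have hB13 : ⁅uB A i 1, uB A i 2⁆ + ⁅uB A i 0, uB A i 3⁆ = 0 := by
    have e1 := lieExp (LB 0) (LB 2)
    rw [hB02, lie_zero] at e1
    apply smulCancel16 (4 * δ) h4δ
    linear_combination (norm := module) -e1
  have hB04 : ⁅uB A i 0, uB A i 4⁆ = (-2 : ℂ) • ⁅uB A i 1, uB A i 3⁆ := by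
    have e1 := lieExp (LB 1) (LB 2)
    rw [lie_self] at e1
    have e2 := lieExp (LB 0) (LB 3)
    have e0 : ⁅uH1 A i, ⁅uB A i 1, uB A i 2⁆⁆ + ⁅uH1 A i, ⁅uB A i 0, uB A i 3⁆⁆ = 0 := by
      rw [← lie_add, hB13, lie_zero]
    apply smulCancel16 (4 * δ) h4δ
    linear_combination (norm := module) e0 - e1 - e2
  have hC01 : ⁅uB A j 0, uB A j 1⁆ = uH1 A j := by
    have t : ⁅uB A j 1, uB A j 0⁆ = ⁅uB A j 0, uB A j 1⁆ - (2 : ℂ) • uH1 A j := relbbii16 A j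
    rw [show ⁅uB A j 1, uB A j 0⁆ = -⁅uB A j 0, uB A j 1⁆ from lskew _ _] at t
    linear_combination (norm := module) (-(1 : ℂ)/2) • t
  have hC02 : ⁅uB A j 0, uB A j 2⁆ = 0 := by
    have e1 := lieExp (LC 0) (LC 1)
    rw [lie_self, hC01, lie_self] at e1
    apply smulCancel16 (4 * δ) h4δ
    linear_combination (norm := module) -e1
  have hC13 : ⁅uB A j 1, uB A j 2⁆ + ⁅uB A j 0, uB A j 3⁆ = 0 := by
    have e1 := lieExp (LC 0) (LC 2)
    rw [hC02, lie_zero] at e1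
    apply smulCancel16 (4 * δ) h4δ
    linear_combination (norm := module) -e1
  have hC04 : ⁅uB A j 0, uB A j 4⁆ = (-2 : ℂ) • ⁅uB A j 1, uB A j 3⁆ := by
    have e1 := lieExp (LC 1) (LC 2)
    rw [lie_self] at e1
    have e2 := lieExp (LC 0) (LC 3)
    have e0 : ⁅uH1 A j, ⁅uB A j 1, uB A j 2⁆⁆ + ⁅uH1 A j, ⁅uB A j 0, uB A j 3⁆⁆ = 0 := by
      rw [← lie_add, hC13, lie_zero]
    apply smulCancel16 (4 * δ) h4δ
    linear_combination (norm := module) e0 - e1 - e2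
  have X1e : ⁅uB A i 1, uB A j 0⁆ = ⁅uB A i 0, uB A j 1⁆ := relbbij16 A i j hne
  have X2e : ⁅uB A i 2, uB A j 0⁆ = ⁅uB A i 1, uB A j 1⁆ := by
    have e1 := lieExp (LB 1) (LBC 0)
    have e2 := lieExp (LB 0) (LBC 1)
    have e3 := lieExp (LCB 1) (LC 0)
    have e4 := lieExp (LCB 0) (LC 1)
    have g1 : ⁅uH1 A i, ⁅uB A i 1, uB A j 0⁆⁆ = ⁅uH1 A i, ⁅uB A i 0, uB A j 1⁆⁆ := by rw [X1e]
    have g2 : ⁅uH1 A j, ⁅uB A i 1, uB A j 0⁆⁆ = ⁅uH1 A j, ⁅uB A i 0, uB A j 1⁆⁆ := by rw [X1e]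
    apply smulCancel16 (6 * δ) h6δ
    linear_combination (norm := module) (-2 : ℂ) • (e1 - e2 - g1) - (e3 - e4 - g2)
  have X3e : ⁅uB A i 3, uB A j 0⁆ = ⁅uB A i 2, uB A j 1⁆ := by
    have e1 := lieExp (LB 2) (LBC 0)
    have e2 := lieExp (LB 1) (LBC 1)
    have e3 := lieExp (LCB 2) (LC 0)
    have e4 := lieExp (LCB 1) (LC 1)
    have g1 : ⁅uH1 A i, ⁅uB A i 2, uB A j 0⁆⁆ = ⁅uH1 A i, ⁅uB A i 1, uB A j 1⁆⁆ := by rw [X2e]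
    have g2 : ⁅uH1 A j, ⁅uB A i 2, uB A j 0⁆⁆ = ⁅uH1 A j, ⁅uB A i 1, uB A j 1⁆⁆ := by rw [X2e]
    apply smulCancel16 (6 * δ) h6δ
    linear_combination (norm := module) (-2 : ℂ) • (e1 - e2 - g1) - (e3 - e4 - g2)
  have X4e : ⁅uB A i 4, uB A j 0⁆ = ⁅uB A i 3, uB A j 1⁆ := by
    have e1 := lieExp (LB 3) (LBC 0)
    have e2 := lieExp (LB 2) (LBC 1)
    have e3 := lieExp (LCB 3) (LC 0)
    have e4 := lieExp (LCB 2) (LC 1)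
    have g1 : ⁅uH1 A i, ⁅uB A i 3, uB A j 0⁆⁆ = ⁅uH1 A i, ⁅uB A i 2, uB A j 1⁆⁆ := by rw [X3e]
    have g2 : ⁅uH1 A j, ⁅uB A i 3, uB A j 0⁆⁆ = ⁅uH1 A j, ⁅uB A i 2, uB A j 1⁆⁆ := by rw [X3e]
    apply smulCancel16 (6 * δ) h6δ
    linear_combination (norm := module) (-2 : ℂ) • (e1 - e2 - g1) - (e3 - e4 - g2)
  have HX0 : ⁅uH1 A i, ⁅uB A i 0, uB A j 0⁆⁆ = (2 * δ) • ⁅uB A i 1, uB A j 0⁆ := by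
    rw [lieExp (LB 0) (LBC 0), ← X1e]
    module
  have H'X0 : ⁅uH1 A j, ⁅uB A i 0, uB A j 0⁆⁆ = (2 * δ) • ⁅uB A i 1, uB A j 0⁆ := by
    rw [lieExp (LCB 0) (LC 0), ← X1e]
    module
  have HX1 : ⁅uH1 A i, ⁅uB A i 1, uB A j 0⁆⁆ = (2 * δ) • ⁅uB A i 2, uB A j 0⁆ := by
    rw [lieExp (LB 1) (LBC 0), ← X2e]
    module
  have H'X1 : ⁅uH1 A j, ⁅uB A i 1, uB A j 0⁆⁆ = (2 * δ) • ⁅uB A i 2, uB A j 0⁆ := by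
    rw [lieExp (LCB 1) (LC 0), ← X2e]
    module
  have HX2 : ⁅uH1 A i, ⁅uB A i 2, uB A j 0⁆⁆ = (2 * δ) • ⁅uB A i 3, uB A j 0⁆ := by
    rw [lieExp (LB 2) (LBC 0), ← X3e]
    module
  have H'X2 : ⁅uH1 A j, ⁅uB A i 2, uB A j 0⁆⁆ = (2 * δ) • ⁅uB A i 3, uB A j 0⁆ := by
    rw [lieExp (LCB 2) (LC 0), ← X3e]
    module
  have HX3 : ⁅uH1 A i, ⁅uB A i 3, uB A j 0⁆⁆ = (2 * δ) • ⁅uB A i 4, uB A j 0⁆ := by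
    rw [lieExp (LB 3) (LBC 0), ← X4e]
    module
  have H'X3 : ⁅uH1 A j, ⁅uB A i 3, uB A j 0⁆⁆ = (2 * δ) • ⁅uB A i 4, uB A j 0⁆ := by
    rw [lieExp (LCB 3) (LC 0), ← X4e]
    module
  have F00 : ⁅uB A i 0, ⁅uB A i 0, uB A j 0⁆⁆ = (-δ) • uB A j 0 := rels116 A i j hij
  have G00 : ⁅uB A j 0, ⁅uB A i 0, uB A j 0⁆⁆ = δ • uB A i 0 := by
    have t : ⁅uB A j 0, ⁅uB A j 0, uB A i 0⁆⁆ = (-((A.d j : ℝ) : ℂ)) • uB A i 0 := rels116 A j i hji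
    rw [hdji, show ⁅uB A j 0, uB A i 0⁆ = -⁅uB A i 0, uB A j 0⁆ from lskew _ _, lie_neg] at t
    linear_combination (norm := module) -t
  have F10 : ⁅uB A i 1, ⁅uB A i 0, uB A j 0⁆⁆ = δ • uB A j 1 := by
    have e1 := lieExp (LB 0) HX0
    have e1' : ⁅uH1 A i, ⁅uB A i 0, ⁅uB A i 0, uB A j 0⁆⁆⁆ = (-δ) • ((-(2 * δ)) • uB A j 1) := by
      rw [F00, lsm, LBC 0]
    have e2 := lieExp (LCB 0) H'X0
    have e2' : ⁅uH1 A j, ⁅uB A i 0, ⁅uB A i 0, uB A j 0⁆⁆⁆ = (-δ) • ((4 * δ) • uB A j 1) := by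
      rw [F00, lsm, LC 0]
    apply smulCancel16 (6 * δ) h6δ
    linear_combination (norm := module) -(e1 - e1') + (e2 - e2')
  have F01 : ⁅uB A i 0, ⁅uB A i 1, uB A j 0⁆⁆ = (-δ) • uB A j 1 := by
    have e1 := lieExp (LB 0) HX0
    have e1' : ⁅uH1 A i, ⁅uB A i 0, ⁅uB A i 0, uB A j 0⁆⁆⁆ = (-δ) • ((-(2 * δ)) • uB A j 1) := by
      rw [F00, lsm, LBC 0]
    have e2 := lieExp (LCB 0) H'X0
    have e2' : ⁅uH1 A j, ⁅uB A i 0, ⁅uB A i 0, uB A j 0⁆⁆⁆ = (-δ) • ((4 * δ) • uB A j 1) := by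
      rw [F00, lsm, LC 0]
    apply smulCancel16 (6 * δ) h6δ
    linear_combination (norm := module) -(e1 - e1') - (2 : ℂ) • (e2 - e2')
  have F02 : ⁅uB A i 0, ⁅uB A i 2, uB A j 0⁆⁆ = (-δ) • uB A j 2 := by
    have e1 := lieExp (LB 0) HX1
    have e1' : ⁅uH1 A i, ⁅uB A i 0, ⁅uB A i 1, uB A j 0⁆⁆⁆ = (-δ) • ((-(2 * δ)) • uB A j 2) := by
      rw [F01, lsm, LBC 1]
    have e2 := lieExp (LCB 0) H'X1
    have e2' : ⁅uH1 A j, ⁅uB A i 0, ⁅uB A i 1, uB A j 0⁆⁆⁆ = (-δ) • ((4 * δ) • uB A j 2) := by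
      rw [F01, lsm, LC 1]
    apply smulCancel16 (6 * δ) h6δ
    linear_combination (norm := module) -(e1 - e1') - (2 : ℂ) • (e2 - e2')
  have F03 : ⁅uB A i 0, ⁅uB A i 3, uB A j 0⁆⁆ = (-δ) • uB A j 3 := by
    have e1 := lieExp (LB 0) HX2
    have e1' : ⁅uH1 A i, ⁅uB A i 0, ⁅uB A i 2, uB A j 0⁆⁆⁆ = (-δ) • ((-(2 * δ)) • uB A j 3) := by
      rw [F02, lsm, LBC 2]
    have e2 := lieExp (LCB 0) H'X2
    have e2' : ⁅uH1 A j, ⁅uB A i 0, ⁅uB A i 2, uB A j 0⁆⁆⁆ = (-δ) • ((4 * δ) • uB A j 3) := by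
      rw [F02, lsm, LC 2]
    apply smulCancel16 (6 * δ) h6δ
    linear_combination (norm := module) -(e1 - e1') - (2 : ℂ) • (e2 - e2')
  have F13 : ⁅uB A i 1, ⁅uB A i 3, uB A j 0⁆⁆ = δ • uB A j 4 := by
    have e1 := lieExp (LB 0) HX3
    have e1' : ⁅uH1 A i, ⁅uB A i 0, ⁅uB A i 3, uB A j 0⁆⁆⁆ = (-δ) • ((-(2 * δ)) • uB A j 4) := by
      rw [F03, lsm, LBC 3]
    have e2 := lieExp (LCB 0) H'X3
    have e2' : ⁅uH1 A j, ⁅uB A i 0, ⁅uB A i 3, uB A j 0⁆⁆⁆ = (-δ) • ((4 * δ) • uB A j 4) := by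
      rw [F03, lsm, LC 3]
    apply smulCancel16 (6 * δ) h6δ
    linear_combination (norm := module) -(e1 - e1') + (e2 - e2')
  have F20 : ⁅uB A i 2, ⁅uB A i 0, uB A j 0⁆⁆ = (-δ) • uB A j 2 := by
    have e1 := lieExp (LB 1) HX0
    have e1' : ⁅uH1 A i, ⁅uB A i 1, ⁅uB A i 0, uB A j 0⁆⁆⁆ = (δ) • ((-(2 * δ)) • uB A j 2) := by
      rw [F10, lsm, LBC 1]
    have e2 := lieExp (LCB 1) H'X0
    have e2' : ⁅uH1 A j, ⁅uB A i 1, ⁅uB A i 0, uB A j 0⁆⁆⁆ = (δ) • ((4 * δ) • uB A j 2) := by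
      rw [F10, lsm, LC 1]
    apply smulCancel16 (6 * δ) h6δ
    linear_combination (norm := module) -(e1 - e1') + (e2 - e2')
  have F30 : ⁅uB A i 3, ⁅uB A i 0, uB A j 0⁆⁆ = δ • uB A j 3 := by
    have e1 := lieExp (LB 2) HX0
    have e1' : ⁅uH1 A i, ⁅uB A i 2, ⁅uB A i 0, uB A j 0⁆⁆⁆ = (-δ) • ((-(2 * δ)) • uB A j 3) := by
      rw [F20, lsm, LBC 2]
    have e2 := lieExp (LCB 2) H'X0
    have e2' : ⁅uH1 A j, ⁅uB A i 2, ⁅uB A i 0, uB A j 0⁆⁆⁆ = (-δ) • ((4 * δ) • uB A j 3) := by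
      rw [F20, lsm, LC 2]
    apply smulCancel16 (6 * δ) h6δ
    linear_combination (norm := module) -(e1 - e1') + (e2 - e2')
  have F31 : ⁅uB A i 3, ⁅uB A i 1, uB A j 0⁆⁆ = δ • uB A j 4 := by
    have e1 := lieExp (LB 3) HX0
    have e1' : ⁅uH1 A i, ⁅uB A i 3, ⁅uB A i 0, uB A j 0⁆⁆⁆ = (δ) • ((-(2 * δ)) • uB A j 4) := by
      rw [F30, lsm, LBC 3]
    have e2 := lieExp (LCB 3) H'X0
    have e2' : ⁅uH1 A j, ⁅uB A i 3, ⁅uB A i 0, uB A j 0⁆⁆⁆ = (δ) • ((4 * δ) • uB A j 4) := by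
      rw [F30, lsm, LC 3]
    apply smulCancel16 (6 * δ) h6δ
    linear_combination (norm := module) -(e1 - e1') - (2 : ℂ) • (e2 - e2')
  have G01 : ⁅uB A j 0, ⁅uB A i 1, uB A j 0⁆⁆ = δ • uB A i 1 := by
    have e1 := lieExp (LBC 0) HX0
    have e1' : ⁅uH1 A i, ⁅uB A j 0, ⁅uB A i 0, uB A j 0⁆⁆⁆ = (δ) • ((4 * δ) • uB A i 1) := by
      rw [G00, lsm, LB 0]
    have e2 := lieExp (LC 0) H'X0
    have e2' : ⁅uH1 A j, ⁅uB A j 0, ⁅uB A i 0, uB A j 0⁆⁆⁆ = (δ) • ((-(2 * δ)) • uB A i 1) := by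
      rw [G00, lsm, LCB 0]
    apply smulCancel16 (6 * δ) h6δ
    linear_combination (norm := module) -(2 : ℂ) • (e1 - e1') - (e2 - e2')
  have G02 : ⁅uB A j 0, ⁅uB A i 2, uB A j 0⁆⁆ = δ • uB A i 2 := by
    have e1 := lieExp (LBC 0) HX1
    have e1' : ⁅uH1 A i, ⁅uB A j 0, ⁅uB A i 1, uB A j 0⁆⁆⁆ = (δ) • ((4 * δ) • uB A i 2) := by
      rw [G01, lsm, LB 1]
    have e2 := lieExp (LC 0) H'X1
    have e2' : ⁅uH1 A j, ⁅uB A j 0, ⁅uB A i 1, uB A j 0⁆⁆⁆ = (δ) • ((-(2 * δ)) • uB A i 2) := by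
      rw [G01, lsm, LCB 1]
    apply smulCancel16 (6 * δ) h6δ
    linear_combination (norm := module) -(2 : ℂ) • (e1 - e1') - (e2 - e2')
  have G03 : ⁅uB A j 0, ⁅uB A i 3, uB A j 0⁆⁆ = δ • uB A i 3 := by
    have e1 := lieExp (LBC 0) HX2
    have e1' : ⁅uH1 A i, ⁅uB A j 0, ⁅uB A i 2, uB A j 0⁆⁆⁆ = (δ) • ((4 * δ) • uB A i 3) := by
      rw [G02, lsm, LB 2]
    have e2 := lieExp (LC 0) H'X2
    have e2' : ⁅uH1 A j, ⁅uB A j 0, ⁅uB A i 2, uB A j 0⁆⁆⁆ = (δ) • ((-(2 * δ)) • uB A i 3) := by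
      rw [G02, lsm, LCB 2]
    apply smulCancel16 (6 * δ) h6δ
    linear_combination (norm := module) -(2 : ℂ) • (e1 - e1') - (e2 - e2')
  have G13 : ⁅uB A j 1, ⁅uB A i 3, uB A j 0⁆⁆ = (-δ) • uB A i 4 := by
    have e1 := lieExp (LBC 0) HX3
    have e1' : ⁅uH1 A i, ⁅uB A j 0, ⁅uB A i 3, uB A j 0⁆⁆⁆ = (δ) • ((4 * δ) • uB A i 4) := by
      rw [G03, lsm, LB 3]
    have e2 := lieExp (LC 0) H'X3
    have e2' : ⁅uH1 A j, ⁅uB A j 0, ⁅uB A i 3, uB A j 0⁆⁆⁆ = (δ) • ((-(2 * δ)) • uB A i 4) := by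
      rw [G03, lsm, LCB 3]
    apply smulCancel16 (6 * δ) h6δ
    linear_combination (norm := module) (e1 - e1') - (e2 - e2')
  have eqA : δ • ⁅uB A i 1, uB A i 3⁆ = ⁅⁅uB A i 1, uB A j 0⁆, ⁅uB A i 3, uB A j 0⁆⁆ + δ • ((-2 : ℂ) • ⁅uB A j 1, uB A j 3⁆) := by
    have w1 : ⁅uB A i 1, ⁅uB A j 0, ⁅uB A i 3, uB A j 0⁆⁆⁆ = δ • ⁅uB A i 1, uB A i 3⁆ := by rw [G03, lsm]
    have w2 := leibniz_lie (uB A i 1) (uB A j 0) (⁅uB A i 3, uB A j 0⁆)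
    rw [F13, lsm, hC04] at w2
    rw [← w1]
    exact w2
  have eqB : (-δ) • ⁅uB A j 1, uB A j 3⁆ = -⁅⁅uB A i 1, uB A j 0⁆, ⁅uB A i 3, uB A j 0⁆⁆ + (-δ) • ((-2 : ℂ) • ⁅uB A i 1, uB A i 3⁆) := by
    have w1 : ⁅uB A j 1, ⁅uB A i 0, ⁅uB A i 3, uB A j 0⁆⁆⁆ = (-δ) • ⁅uB A j 1, uB A j 3⁆ := by rw [F03, lsm]
    have w2 := leibniz_lie (uB A j 1) (uB A i 0) (⁅uB A i 3, uB A j 0⁆)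
    rw [G13, lsm, hB04, show ⁅uB A j 1, uB A i 0⁆ = -⁅uB A i 0, uB A j 1⁆ from lskew _ _,
      ← X1e, lnegl] at w2
    rw [← w1]
    exact w2
  have eqC : δ • (-⁅uB A i 1, uB A i 3⁆) = -⁅⁅uB A i 1, uB A j 0⁆, ⁅uB A i 3, uB A j 0⁆⁆ + δ • ((-2 : ℂ) • ⁅uB A j 1, uB A j 3⁆) := by
    have w1 : ⁅uB A i 3, ⁅uB A j 0, ⁅uB A i 1, uB A j 0⁆⁆⁆ = δ • (-⁅uB A i 1, uB A i 3⁆) := by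
      rw [G01, lsm, show ⁅uB A i 3, uB A i 1⁆ = -⁅uB A i 1, uB A i 3⁆ from lskew _ _]
    have w2 := leibniz_lie (uB A i 3) (uB A j 0) (⁅uB A i 1, uB A j 0⁆)
    rw [F31, lsm, hC04, show ⁅⁅uB A i 3, uB A j 0⁆, ⁅uB A i 1, uB A j 0⁆⁆ = -⁅⁅uB A i 1, uB A j 0⁆, ⁅uB A i 3, uB A j 0⁆⁆ from lskew _ _] at w2
    rw [← w1]
    exact w2
  have hK' : ⁅uB A j 1, uB A j 3⁆ = 0 := by
    apply smulCancel16 (4 * δ) h4δ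
    linear_combination (norm := module) eqA + eqC
  have hK : ⁅uB A i 1, uB A i 3⁆ = 0 := by
    apply smulCancel16 δ hδ
    linear_combination (norm := module) -eqA - eqB + δ • hK'
  refine ⟨?_, ?_, ?_, hK⟩
  · show ⁅uH1 A i, ⁅uB A i 0, uB A i 3⁆⁆ = 0
    rw [lieExp (LB 0) (LB 3), hB04, hK]
    module
  · show ⁅uB A i 0, uB A i 4⁆ = 0
    rw [hB04, hK]
    module
  · rw [hB04, hK]
    module
end
end

section
/- In 𝒰, suppose i, j ∈ I satisfy [h_{i,1}, h_{i,3}] = 0 and (α_i,α_j) ≠ 0. Then [h_{j,1}, h_{j,3}] = 0, h_{j,4} = [b_{j,0}, b_{j,4}] = 0, and [b_{j,1}, b_{j,3}] = 0. -/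
noncomputable section

section LieInst

attribute [local instance] LieRing.ofAssociativeRing

section Aux
variable {I : Type} [Fintype I] [DecidableEq I] (A : CartanData I)

lemma U_rel_hh (i j : I) : ⁅uH1 A i, uH1 A j⁆ = 0 := by
  have h := RingQuot.mkAlgHom_rel ℂ (URel.hh (A := A) i j)
  simpa [Ring.lie_def, map_sub, map_mul, uH1, mh] using h

lemma U_rel_hb0 (i j : I) : ⁅uH1 A i, uB A j 0⁆ = (2 * (A.al i j : ℂ)) • uB A j 1 := by
  have h := RingQuot.mkAlgHom_rel ℂ (URel.hb (A := A) i j)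
  simpa [Ring.lie_def, map_sub, map_mul, map_smul, uH1, uB0, uB1, uB, mh, mb0, mb1] using h

lemma U_rel_bb (i j : I) :
    ⁅uB A i 1, uB A j 0⁆ = ⁅uB A i 0, uB A j 1⁆ - (if i = j then (2:ℂ) else 0) • uH1 A i := by
  have h := RingQuot.mkAlgHom_rel ℂ (URel.bb (A := A) i j)
  simpa [Ring.lie_def, map_sub, map_mul, map_smul, apply_ite (⇑(RingQuot.mkAlgHom ℂ (URel A))),
    uH1, uB0, uB1, uB, mh, mb0, mb1] using h

end Aux

section Aux2
variable {I : Type} [Fintype I] [DecidableEq I] (A : CartanData I)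

set_option linter.unusedSectionVars false

lemma U_lieS (t : ℂ) (x y : UAlg A) : ⁅x, t • y⁆ = t • ⁅x, y⁆ := lie_smul t x y

lemma U_smulL (t : ℂ) (x y : UAlg A) : ⁅t • x, y⁆ = t • ⁅x, y⁆ := smul_lie t x y

lemma U_cancel {t : ℂ} (ht : t ≠ 0) {x y : UAlg A} (h : t • x = t • y) : x = y := by
  have := congrArg (fun z => t⁻¹ • z) h
  simpa [inv_smul_smul₀ ht] using this

lemma U_sC (k : I) : (2 * (A.al k k : ℂ)) ≠ 0 := by
  have h : A.al k k = A.d k * 2 := by simp [CartanData.al, A.c_diag k]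
  have h2 : (A.al k k : ℝ) ≠ 0 := by
    rw [h]; exact (mul_pos (A.d_pos k) two_pos).ne'
  exact mul_ne_zero two_ne_zero (Complex.ofReal_ne_zero.mpr h2)

lemma al_symm (k l : I) : A.al k l = A.al l k := by
  simp [CartanData.al, A.d_symm k l]

lemma U_HB_self (k : I) (r : ℕ) :
    ⁅uH1 A k, uB A k r⁆ = (2 * (A.al k k : ℂ)) • uB A k (r + 1) := by
  match r with
  | 0 => exact U_rel_hb0 A k k
  | r + 1 =>
    show _ = (2 * (A.al k k : ℂ)) • ((2 * (A.al k k : ℂ))⁻¹ • ⁅uH1 A k, uB A k (r + 1)⁆)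
    rw [smul_inv_smul₀ (U_sC A k)]

lemma U_HB (k l : I) (r : ℕ) :
    ⁅uH1 A k, uB A l r⁆ = (2 * (A.al k l : ℂ)) • uB A l (r + 1) := by
  induction r with
  | zero => exact U_rel_hb0 A k l
  | succ r ih =>
    have key : (2 * (A.al l l : ℂ)) • ⁅uH1 A k, uB A l (r + 1)⁆
        = (2 * (A.al l l : ℂ)) • ((2 * (A.al k l : ℂ)) • uB A l (r + 2)) := by
      calc (2 * (A.al l l : ℂ)) • ⁅uH1 A k, uB A l (r + 1)⁆
          = ⁅uH1 A k, (2 * (A.al l l : ℂ)) • uB A l (r + 1)⁆ := (U_lieS A _ _ _).symm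
        _ = ⁅uH1 A k, ⁅uH1 A l, uB A l r⁆⁆ := by rw [← U_HB_self]
        _ = ⁅⁅uH1 A k, uH1 A l⁆, uB A l r⁆ + ⁅uH1 A l, ⁅uH1 A k, uB A l r⁆⁆ := leibniz_lie _ _ _
        _ = ⁅uH1 A l, (2 * (A.al k l : ℂ)) • uB A l (r + 1)⁆ := by
              rw [U_rel_hh, ih]; simp
        _ = (2 * (A.al k l : ℂ)) • ((2 * (A.al l l : ℂ)) • uB A l (r + 2)) := by
              rw [U_lieS, U_HB_self]
        _ = (2 * (A.al l l : ℂ)) • ((2 * (A.al k l : ℂ)) • uB A l (r + 2)) := smul_comm _ _ _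
    exact U_cancel A (U_sC A l) key

lemma U_H_eq (k : I) : ⁅uB A k 0, uB A k 1⁆ = uH1 A k := by
  have h := U_rel_bb A k k
  rw [if_pos rfl] at h
  have hs : ⁅uB A k 1, uB A k 0⁆ = -⁅uB A k 0, uB A k 1⁆ :=
    neg_eq_iff_eq_neg.mp (lie_skew _ _)
  rw [hs] at h
  have h2 : ⁅uB A k 0, uB A k 1⁆ + ⁅uB A k 0, uB A k 1⁆ = (2:ℂ) • uH1 A k :=
    eq_neg_add_iff_add_eq.mp (sub_eq_iff_eq_add.mp h.symm)
  rw [← two_smul ℂ] at h2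
  exact U_cancel A two_ne_zero h2

lemma U_lieH (m k l : I) (r s : ℕ) :
    ⁅uH1 A m, ⁅uB A k r, uB A l s⁆⁆
      = (2 * (A.al m k : ℂ)) • ⁅uB A k (r + 1), uB A l s⁆
        + (2 * (A.al m l : ℂ)) • ⁅uB A k r, uB A l (s + 1)⁆ := by
  rw [leibniz_lie, U_HB, U_HB, U_smulL, U_lieS]

lemma U_H2 (k : I) : ⁅uB A k 0, uB A k 2⁆ = 0 := by
  have h : ⁅uH1 A k, ⁅uB A k 0, uB A k 1⁆⁆ = 0 := by rw [U_H_eq]; exact lie_self _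
  rw [U_lieH] at h
  simp only [lie_self, smul_zero, zero_add] at h
  exact (smul_eq_zero.mp h).resolve_left (U_sC A k)

lemma U_H3 (k : I) : ⁅uB A k 1, uB A k 2⁆ = -⁅uB A k 0, uB A k 3⁆ := by
  have h : ⁅uH1 A k, ⁅uB A k 0, uB A k 2⁆⁆ = 0 := by rw [U_H2]; exact lie_zero _
  rw [U_lieH, ← smul_add] at h
  have h2 := (smul_eq_zero.mp h).resolve_left (U_sC A k)
  exact eq_neg_of_add_eq_zero_left h2

end Aux2

section Aux3
set_option linter.unusedSectionVars false
variable {I : Type} [Fintype I] [DecidableEq I] (A : CartanData I)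

lemma U_lielie (x y z : UAlg A) : ⁅⁅x, y⁆, z⁆ = ⁅x, ⁅y, z⁆⁆ - ⁅y, ⁅x, z⁆⁆ := lie_lie x y z

lemma U_leib (x y z : UAlg A) : ⁅x, ⁅y, z⁆⁆ = ⁅⁅x, y⁆, z⁆ + ⁅y, ⁅x, z⁆⁆ := leibniz_lie x y z

lemma U_skew (x y : UAlg A) : ⁅x, y⁆ = -⁅y, x⁆ := (lie_skew x y).symm

lemma U_lieneg (x y : UAlg A) : ⁅x, -y⁆ = -⁅x, y⁆ := lie_neg x y

lemma U_neglie (x y : UAlg A) : ⁅-x, y⁆ = -⁅x, y⁆ := neg_lie x y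

lemma U_lieself (x : UAlg A) : ⁅x, x⁆ = 0 := lie_self x

lemma U_zerolie (x : UAlg A) : ⁅(0 : UAlg A), x⁆ = 0 := zero_lie x

lemma U_alC (k l : I) : (A.al l k : ℂ) = (A.al k l : ℂ) := by
  rw [al_symm A l k]

lemma U_aC {k l : I} (ha : (A.al k l : ℂ) ≠ 0) : (2 * (A.al k l : ℂ)) ≠ 0 :=
  mul_ne_zero two_ne_zero ha

lemma U_subsmul (a b : ℂ) (x : UAlg A) : (a - b) • x = a • x - b • x := sub_smul a b x

lemma U_delta {k l : I} (hkl : k ≠ l) :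
    (2 * (A.al k k : ℂ)) * (2 * (A.al l l : ℂ))
      - (2 * (A.al k l : ℂ)) * (2 * (A.al k l : ℂ)) ≠ 0 := by
  have h1 := A.d_pos k
  have h2 := A.d_pos l
  have h3 : ((A.c k l : ℝ)) * ((A.c l k : ℝ)) ≤ 3 := by
    have := A.c_bound k l hkl
    exact_mod_cast this
  have e1 : A.al k k = A.d k * 2 := by simp [CartanData.al, A.c_diag k]
  have e2 : A.al l l = A.d l * 2 := by simp [CartanData.al, A.c_diag l]
  have e3 : A.al k l * A.al k l = (A.d k * A.d l) * ((A.c k l : ℝ) * (A.c l k : ℝ)) := by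
    have hd := A.d_symm k l
    simp only [CartanData.al]
    nth_rewrite 2 [hd]
    ring
  have hr : 0 < A.al k k * A.al l l - A.al k l * A.al k l := by
    rw [e1, e2, e3]
    nlinarith [mul_pos h1 h2]
  have h4 : ((A.al k k : ℂ)) * (A.al l l : ℂ) - (A.al k l : ℂ) * (A.al k l : ℂ) ≠ 0 := by
    rw [show ((A.al k k : ℂ)) * (A.al l l : ℂ) - (A.al k l : ℂ) * (A.al k l : ℂ)
        = ((A.al k k * A.al l l - A.al k l * A.al k l : ℝ) : ℂ) by push_cast; ring]
    exact Complex.ofReal_ne_zero.mpr hr.ne'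
  intro hc
  exact h4 (by linear_combination hc / 4)

lemma U_Estep {k l : I} (hkl : k ≠ l) (ha : (A.al k l : ℂ) ≠ 0) (r s : ℕ)
    (h : ⁅uB A k (r+1), uB A l s⁆ = ⁅uB A k r, uB A l (s+1)⁆) :
    ⁅uB A k (r+2), uB A l s⁆ = ⁅uB A k (r+1), uB A l (s+1)⁆ ∧
    ⁅uB A k (r+1), uB A l (s+1)⁆ = ⁅uB A k r, uB A l (s+2)⁆ := by
  have t1 := U_lieH A k k l (r+1) s
  have t2 := U_lieH A k k l r (s+1)
  have u1 := U_lieH A l k l (r+1) s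
  have u2 := U_lieH A l k l r (s+1)
  rw [h] at t1 u1
  have e1 := t1.symm.trans t2
  have e2 := u1.symm.trans u2
  rw [U_alC A k l] at e2
  rw [show r+1+1 = r+2 from rfl, show s+1+1 = s+2 from rfl] at e1 e2
  -- e1 : ck•P + a•Q = ck•Q + a•R ; e2 : a•P + cl•Q = a•Q + cl•R
  have e1' : (2*(A.al k k : ℂ)) • (⁅uB A k (r+2), uB A l s⁆ - ⁅uB A k (r+1), uB A l (s+1)⁆)
      = (2*(A.al k l : ℂ)) • (⁅uB A k r, uB A l (s+2)⁆ - ⁅uB A k (r+1), uB A l (s+1)⁆) := by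
    rw [smul_sub, smul_sub, sub_eq_sub_iff_add_eq_add]
    exact e1.trans (add_comm _ _)
  have e2' : (2*(A.al k l : ℂ)) • (⁅uB A k (r+2), uB A l s⁆ - ⁅uB A k (r+1), uB A l (s+1)⁆)
      = (2*(A.al l l : ℂ)) • (⁅uB A k r, uB A l (s+2)⁆ - ⁅uB A k (r+1), uB A l (s+1)⁆) := by
    rw [smul_sub, smul_sub, sub_eq_sub_iff_add_eq_add]
    exact e2.trans (add_comm _ _)
  have c1 : ((2*(A.al k k : ℂ)) * (2*(A.al l l : ℂ)))
        • (⁅uB A k (r+2), uB A l s⁆ - ⁅uB A k (r+1), uB A l (s+1)⁆)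
      = ((2*(A.al k l : ℂ)) * (2*(A.al k l : ℂ)))
        • (⁅uB A k (r+2), uB A l s⁆ - ⁅uB A k (r+1), uB A l (s+1)⁆) := by
    rw [mul_comm (2*(A.al k k : ℂ)), mul_smul, e1', smul_comm, ← e2', ← mul_smul]
  have c2 : ((2*(A.al k k : ℂ)) * (2*(A.al l l : ℂ))
        - (2*(A.al k l : ℂ)) * (2*(A.al k l : ℂ)))
        • (⁅uB A k (r+2), uB A l s⁆ - ⁅uB A k (r+1), uB A l (s+1)⁆) = 0 := by
    rw [U_subsmul, c1, sub_self]
  have hX : ⁅uB A k (r+2), uB A l s⁆ - ⁅uB A k (r+1), uB A l (s+1)⁆ = 0 :=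
    (smul_eq_zero.mp c2).resolve_left (U_delta A hkl)
  have hZ : ⁅uB A k r, uB A l (s+2)⁆ - ⁅uB A k (r+1), uB A l (s+1)⁆ = 0 := by
    have := e2'
    rw [hX, smul_zero] at this
    exact (smul_eq_zero.mp this.symm).resolve_left (U_sC A l)
  exact ⟨sub_eq_zero.mp hX, (sub_eq_zero.mp hZ).symm⟩

lemma U_E {k l : I} (hkl : k ≠ l) (ha : (A.al k l : ℂ) ≠ 0) :
    ∀ r s : ℕ, ⁅uB A k (r+1), uB A l s⁆ = ⁅uB A k r, uB A l (s+1)⁆ := by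
  intro r
  induction r with
  | zero =>
    intro s
    induction s with
    | zero =>
      have h := U_rel_bb A k l
      rw [if_neg hkl, zero_smul, sub_zero] at h
      exact h
    | succ s ihs => exact (U_Estep A hkl ha 0 s ihs).2
  | succ r ihr =>
    intro s
    exact (U_Estep A hkl ha r s (ihr s)).1

lemma U_shift {k l : I} (hkl : k ≠ l) (ha : (A.al k l : ℂ) ≠ 0) :
    ∀ r s : ℕ, ⁅uB A k r, uB A l s⁆ = ⁅uB A k 0, uB A l (r+s)⁆ := by
  intro r
  induction r with
  | zero => intro s; rw [Nat.zero_add]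
  | succ r ih =>
    intro s
    rw [U_E A hkl ha r s, ih (s+1), show r + (s+1) = r+1+s from by omega]

end Aux3

section Aux4
set_option linter.unusedSectionVars false
set_option linter.unusedVariables false
variable {I : Type} [Fintype I] [DecidableEq I] (A : CartanData I)

lemma U_cross {k l : I} (hkl : k ≠ l) (ha : (A.al k l : ℂ) ≠ 0) (t m : ℕ) :
    ⁅uB A k t, uB A l m⁆ = -⁅uB A l 0, uB A k (m + t)⁆ := by
  have h := U_shift A hkl.symm (by rw [U_alC A k l]; exact ha) m t
  rw [U_skew, h]

lemma U_D1 {k l : I} (hkl : k ≠ l) (ha : (A.al k l : ℂ) ≠ 0) (m : ℕ) :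
    ⁅uB A k 1, ⁅uB A l 0, uB A k m⁆⁆ - ⁅uB A k 0, ⁅uB A l 0, uB A k (m+1)⁆⁆
      = (2 * (A.al k l : ℂ)) • uB A l (m+1) := by
  have key : ⁅uB A k 1, ⁅uB A l 0, uB A k m⁆⁆ - ⁅uB A k 0, ⁅uB A l 0, uB A k (m+1)⁆⁆
      = ⁅⁅uB A k 0, uB A k 1⁆, uB A l m⁆ := by
    rw [U_lielie, U_cross A hkl ha 0 m, U_cross A hkl ha 1 m, U_lieneg, U_lieneg,
      Nat.add_zero]
    abel
  rw [key, U_H_eq, U_HB]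

lemma U_D2 {k l : I} (hkl : k ≠ l) (ha : (A.al k l : ℂ) ≠ 0) (m : ℕ) :
    ⁅uB A k 2, ⁅uB A l 0, uB A k m⁆⁆ = ⁅uB A k 0, ⁅uB A l 0, uB A k (m+2)⁆⁆ := by
  have key : ⁅uB A k 2, ⁅uB A l 0, uB A k m⁆⁆ - ⁅uB A k 0, ⁅uB A l 0, uB A k (m+2)⁆⁆
      = ⁅⁅uB A k 0, uB A k 2⁆, uB A l m⁆ := by
    rw [U_lielie, U_cross A hkl ha 0 m, U_cross A hkl ha 2 m, U_lieneg, U_lieneg,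
      Nat.add_zero]
    abel
  rw [U_H2, U_zerolie] at key
  exact sub_eq_zero.mp key

lemma U_L8 {k l : I} (hkl : k ≠ l) (ha : (A.al k l : ℂ) ≠ 0) (r : ℕ) :
    ⁅⁅uB A k 0, uB A k 3⁆, uB A l r⁆ = (2 * (A.al k l : ℂ)) • uB A l (r+3) := by
  have h03 : ⁅uB A k 0, uB A k 3⁆ = -⁅uB A k 1, uB A k 2⁆ := by
    rw [U_H3, neg_neg]
  have d1 : ⁅uB A k 1, ⁅uB A l 0, uB A k (r+2)⁆⁆ - ⁅uB A k 0, ⁅uB A l 0, uB A k (r+3)⁆⁆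
      = (2 * (A.al k l : ℂ)) • uB A l (r+3) := by
    have := U_D1 A hkl ha (r+2)
    rwa [show r+2+1 = r+3 from by omega] at this
  have d2 : ⁅uB A k 2, ⁅uB A l 0, uB A k (r+1)⁆⁆
      = ⁅uB A k 0, ⁅uB A l 0, uB A k (r+3)⁆⁆ := by
    have := U_D2 A hkl ha (r+1)
    rwa [show r+1+2 = r+3 from by omega] at this
  calc ⁅⁅uB A k 0, uB A k 3⁆, uB A l r⁆
      = -⁅⁅uB A k 1, uB A k 2⁆, uB A l r⁆ := by rw [h03, U_neglie]
    _ = ⁅uB A k 1, ⁅uB A l 0, uB A k (r+2)⁆⁆ - ⁅uB A k 2, ⁅uB A l 0, uB A k (r+1)⁆⁆ := by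
        rw [U_lielie, U_cross A hkl ha 2 r, U_cross A hkl ha 1 r, U_lieneg, U_lieneg]
        abel
    _ = ⁅uB A k 1, ⁅uB A l 0, uB A k (r+2)⁆⁆ - ⁅uB A k 0, ⁅uB A l 0, uB A k (r+3)⁆⁆ := by
        rw [d2]
    _ = (2 * (A.al k l : ℂ)) • uB A l (r+3) := d1

lemma U_rank1 (k : I) (h : ⁅uH1 A k, ⁅uB A k 0, uB A k 3⁆⁆ = 0) :
    ⁅uB A k 1, uB A k 3⁆ = 0 ∧ ⁅uB A k 0, uB A k 4⁆ = 0 := by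
  have l1 : ⁅uH1 A k, ⁅uB A k 1, uB A k 2⁆⁆ = 0 := by
    rw [U_H3, U_lieneg, h, neg_zero]
  have l2 := U_lieH A k k k 1 2
  rw [l1, U_lieself, smul_zero, zero_add] at l2
  have h13 : ⁅uB A k 1, uB A k 3⁆ = 0 :=
    (smul_eq_zero.mp l2.symm).resolve_left (U_sC A k)
  have l3 := U_lieH A k k k 0 3
  rw [h, h13, smul_zero, zero_add] at l3
  have h04 : ⁅uB A k 0, uB A k 4⁆ = 0 :=
    (smul_eq_zero.mp l3.symm).resolve_left (U_sC A k)
  exact ⟨h13, h04⟩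

end Aux4

end LieInst

/-- in `𝒰`, if `[h_{i,1}, h_{i,3}] = 0` and `(α_i,α_j) ≠ 0`, then
`[h_{j,1}, h_{j,3}] = 0`, `h_{j,4} = [b_{j,0}, b_{j,4}] = 0` and `[b_{j,1}, b_{j,3}] = 0`. -/
theorem U_hi4_propagation
    {I : Type} [Fintype I] [DecidableEq I] [Nonempty I] (A : CartanData I)
    (i j : I) (h13 : ⁅uH A i 1, uH A i 3⁆ = 0) (hal : A.al i j ≠ 0) :
    ⁅uH A j 1, uH A j 3⁆ = 0 ∧ uH A j 4 = 0 ∧ ⁅uB A j 0, uB A j 4⁆ = 0 ∧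
      ⁅uB A j 1, uB A j 3⁆ = 0 := by
  have h13' : ⁅uH1 A i, ⁅uB A i 0, uB A i 3⁆⁆ = 0 := h13
  obtain ⟨hi13, hi04⟩ := U_rank1 A i h13'
  by_cases hij : j = i
  · subst hij
    refine ⟨h13, ?_, ?_, hi13⟩
    · show ⁅uB0 A j, uB A j 4⁆ = 0
      exact hi04
    · exact hi04
  · have ha : (A.al i j : ℂ) ≠ 0 := by
      exact_mod_cast Complex.ofReal_ne_zero.mpr hal
    have haji : (A.al j i : ℂ) ≠ 0 := by rw [U_alC A i j]; exact ha
    -- [h_{j,3}, h_{i,1}] = 0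
    have key : ⁅uH1 A i, ⁅uB A j 0, uB A j 3⁆⁆ = 0 := by
      have e : ⁅⁅uB A j 0, uB A j 3⁆, uH1 A i⁆ = 0 := by
        rw [← U_H_eq A i, U_leib, U_L8 A (Ne.symm hij).symm haji 0,
          U_L8 A (Ne.symm hij).symm haji 1, show (0:ℕ)+3 = 3 from rfl,
          show (1:ℕ)+3 = 4 from rfl, U_smulL, U_lieS,
          U_skew A (uB A i 3) (uB A i 1), hi13, hi04]
        simp
      rw [U_skew, e, neg_zero]
    -- extract [b_{j,1}, b_{j,3}] = 0
    have l1 : ⁅uH1 A i, ⁅uB A j 1, uB A j 2⁆⁆ = 0 := by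
      rw [U_H3, U_lieneg, key, neg_zero]
    have l2 := U_lieH A i j j 1 2
    rw [l1, U_lieself, smul_zero, zero_add] at l2
    have hj13 : ⁅uB A j 1, uB A j 3⁆ = 0 :=
      (smul_eq_zero.mp l2.symm).resolve_left (U_aC A ha)
    have l3 := U_lieH A i j j 0 3
    rw [key, hj13, smul_zero, zero_add] at l3
    have hj04 : ⁅uB A j 0, uB A j 4⁆ = 0 :=
      (smul_eq_zero.mp l3.symm).resolve_left (U_aC A ha)
    have hjh : ⁅uH1 A j, ⁅uB A j 0, uB A j 3⁆⁆ = 0 := by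
      rw [U_lieH A j j j 0 3, hj13, hj04]
      simp
    refine ⟨hjh, ?_, hj04, hj13⟩
    show ⁅uB0 A j, uB A j 4⁆ = 0
    exact hj04
end
end

section
/- In 𝒰, if i ∈ I satisfies [h_{i,1}, h_{i,3}] = 0, then [h_{i,3}, b_{i,r}] = 2(α_i,α_i)·b_{i,r+3} for all r ∈ ℕ. -/
noncomputable section

set_option linter.unusedSectionVars false

section AuxProof

attribute [local instance 100] LieRing.ofAssociativeRing

variable {I : Type} [Fintype I] [DecidableEq I] (A : CartanData I) (i : I)

lemma aux_a_ne : (2 * (A.al i i : ℂ)) ≠ 0 := by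
  have hd := A.d_pos i
  have hal : A.al i i = A.d i * 2 := by
    simp [CartanData.al, A.c_diag i]
  rw [hal]
  intro h
  have h' : ((A.d i * 2 : ℝ) : ℂ) = 0 := by
    have h2 : (2 : ℂ) ≠ 0 := two_ne_zero
    exact (mul_eq_zero.mp h).resolve_left h2
  have : A.d i * 2 = 0 := by exact_mod_cast h'
  nlinarith

lemma aux_mk_lie (x y : FreeAlgebra ℂ (MinGen I)) :
    RingQuot.mkAlgHom ℂ (URel A) ⁅x, y⁆ =
      ⁅RingQuot.mkAlgHom ℂ (URel A) x, RingQuot.mkAlgHom ℂ (URel A) y⁆ := by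
  simp [Ring.lie_def, map_sub, map_mul]

lemma aux_lie_smul (c : ℂ) (x y : UAlg A) : ⁅x, c • y⁆ = c • ⁅x, y⁆ := by
  simp [Ring.lie_def, mul_smul_comm, smul_mul_assoc, smul_sub]

lemma aux_smul_lie (c : ℂ) (x y : UAlg A) : ⁅c • x, y⁆ = c • ⁅x, y⁆ := by
  simp [Ring.lie_def, mul_smul_comm, smul_mul_assoc, smul_sub]

/-- `[h₁, b₀] = a b₁`. -/
lemma aux_hb0 : ⁅uH1 A i, uB0 A i⁆ = (2 * (A.al i i : ℂ)) • uB1 A i := by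
  have h := RingQuot.mkAlgHom_rel ℂ (URel.hb (A := A) i i)
  rw [aux_mk_lie, map_smul] at h
  exact h

/-- `[h₁, bᵣ] = a b_{r+1}` for all `r`. -/
lemma aux_hb : ∀ r : ℕ, ⁅uH1 A i, uB A i r⁆ = (2 * (A.al i i : ℂ)) • uB A i (r + 1)
  | 0 => aux_hb0 A i
  | (r + 1) => by
      show ⁅uH1 A i, uB A i (r + 1)⁆ =
        (2 * (A.al i i : ℂ)) • ((2 * (A.al i i : ℂ))⁻¹ • ⁅uH1 A i, uB A i (r + 1)⁆)
      rw [smul_smul, mul_inv_cancel₀ (aux_a_ne A i), one_smul]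

/-- `b_{r+1} = a⁻¹ [h₁, bᵣ]` for all `r`. -/
lemma aux_b_succ (r : ℕ) :
    uB A i (r + 1) = (2 * (A.al i i : ℂ))⁻¹ • ⁅uH1 A i, uB A i r⁆ := by
  rw [aux_hb, smul_smul, inv_mul_cancel₀ (aux_a_ne A i), one_smul]

/-- `[b₀, b₁] = h₁`. -/
lemma aux_b0b1 : ⁅uB0 A i, uB1 A i⁆ = uH1 A i := by
  have h := RingQuot.mkAlgHom_rel ℂ (URel.bb (A := A) i i)
  rw [aux_mk_lie, map_sub, aux_mk_lie, map_smul] at h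
  simp only [if_pos rfl] at h
  change ⁅uB1 A i, uB0 A i⁆ = ⁅uB0 A i, uB1 A i⁆ - (2 : ℂ) • uH1 A i at h
  have hskew : ⁅uB1 A i, uB0 A i⁆ = -⁅uB0 A i, uB1 A i⁆ :=
    (lie_skew (uB1 A i) (uB0 A i)).symm
  have e : -⁅uB0 A i, uB1 A i⁆ = ⁅uB0 A i, uB1 A i⁆ - (2 : ℂ) • uH1 A i :=
    hskew.symm.trans h
  rw [two_smul] at e
  have e3 : ⁅uB0 A i, uB1 A i⁆ = -(⁅uB0 A i, uB1 A i⁆ - (uH1 A i + uH1 A i)) :=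
    neg_eq_iff_eq_neg.mp e
  rw [neg_sub] at e3
  have e2 : ⁅uB0 A i, uB1 A i⁆ + ⁅uB0 A i, uB1 A i⁆ = uH1 A i + uH1 A i :=
    eq_sub_iff_add_eq.mp e3
  calc ⁅uB0 A i, uB1 A i⁆
      = (2 : ℂ)⁻¹ • (⁅uB0 A i, uB1 A i⁆ + ⁅uB0 A i, uB1 A i⁆) := by
        rw [← two_smul ℂ, smul_smul, inv_mul_cancel₀ (two_ne_zero), one_smul]
    _ = (2 : ℂ)⁻¹ • (uH1 A i + uH1 A i) := by rw [e2]
    _ = uH1 A i := by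
        rw [← two_smul ℂ, smul_smul, inv_mul_cancel₀ (two_ne_zero), one_smul]

/-- `[b₀, b₂] = 0`. -/
lemma aux_b0b2 : ⁅uB0 A i, uB A i 2⁆ = 0 := by
  have h2 : uB A i 2 = (2 * (A.al i i : ℂ))⁻¹ • ⁅uH1 A i, uB1 A i⁆ := rfl
  rw [h2, aux_lie_smul, leibniz_lie, ← lie_skew (uB0 A i) (uH1 A i), aux_hb0, aux_b0b1]
  rw [neg_lie, aux_smul_lie]
  simp

/-- `h₃ = [b₂, b₁]`. -/
lemma aux_h3_eq : uH A i 3 = ⁅uB A i 2, uB1 A i⁆ := by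
  show ⁅uB0 A i, uB A i 3⁆ = ⁅uB A i 2, uB1 A i⁆
  rw [aux_b_succ A i 2, aux_lie_smul, leibniz_lie, aux_b0b2, lie_zero, add_zero,
    ← lie_skew (uB0 A i) (uH1 A i), aux_hb0, neg_lie, aux_smul_lie, smul_neg, smul_smul,
    inv_mul_cancel₀ (aux_a_ne A i), one_smul, lie_skew]

/-- Base case: `[h₃, b₀] = a b₃`. -/
lemma aux_h3b0 : ⁅uH A i 3, uB A i 0⁆ = (2 * (A.al i i : ℂ)) • uB A i 3 := by
  rw [aux_h3_eq, ← lie_skew, leibniz_lie]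
  have h1 : ⁅uB A i 0, uB A i 2⁆ = 0 := aux_b0b2 A i
  have h2 : ⁅uB A i 0, uB1 A i⁆ = uH1 A i := aux_b0b1 A i
  rw [h1, zero_lie, zero_add, h2, lie_skew (uH1 A i) (uB A i 2)]
  exact aux_hb A i 2

end AuxProof

/-- in `𝒰`, if `[h_{i,1}, h_{i,3}] = 0` then
`[h_{i,3}, b_{i,r}] = 2(α_i,α_i) b_{i,r+3}` for all `r`. -/
theorem U_h3_b_same_index
    {I : Type} [Fintype I] [DecidableEq I] [Nonempty I] (A : CartanData I)
    (i : I) (h13 : ⁅uH A i 1, uH A i 3⁆ = 0) (r : ℕ) :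
    ⁅uH A i 3, uB A i r⁆ = (2 * (A.al i i : ℂ)) • uB A i (r + 3) := by
  letI : LieRing (UAlg A) := LieRing.ofAssociativeRing
  induction r with
  | zero => exact aux_h3b0 A i
  | succ r ih =>
      rw [aux_b_succ A i r, aux_lie_smul, leibniz_lie]
      have hc : ⁅uH A i 3, uH1 A i⁆ = (0 : UAlg A) := by
        rw [← lie_skew, show ⁅uH1 A i, uH A i 3⁆ = 0 from h13, neg_zero]
      rw [hc, zero_lie, zero_add, ih, aux_lie_smul, aux_hb A i (r + 3), smul_smul, smul_smul,
        ← mul_assoc, inv_mul_cancel₀ (aux_a_ne A i), one_mul]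
end
end
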